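/- Let C₀ ⊆ F_q^ℓ be a p-divisible linear code (p = char F_q) with p not dividing ℓ, and define C = ker M ⊆ F_p^n, n = qℓ, where M is the incidence matrix of the transversal design of C₀. Then C^⊥ ∩ P ⊆ C, where P is the parity-check code {x ∈ F_p^n : Σ_j x_j = 0}; consequently dim_{F_p} C ≥ (n − 1)/2. -/

import Mathlib

/-- For a p-divisible linear code C₀ ⊆ F_q^ℓ (p = char F_q) with p ∤ ℓ, the
code C = ker M over F_p (M the incidence matrix of the transversal design of
C₀) satisfies C^⊥ ∩ P ⊆ C where P is the parity-check code, and hence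
dim C ≥ (n − 1)/2 with n = qℓ. -/
theorem stmt17 {F : Type*} [Field F] [Fintype F] [DecidableEq F]
    (p ℓ : ℕ) [Fact p.Prime] [CharP F p] (hpl : ¬ p ∣ ℓ)
    (C₀ : Submodule F (Fin ℓ → F))
    (hdiv : ∀ c ∈ C₀, p ∣ hammingNorm c)
    (M : Matrix C₀ (F × Fin ℓ) (ZMod p))
    (hM : ∀ (c : C₀) (q : F × Fin ℓ),
      M c q = if c.1 q.2 = q.1 then 1 else 0) :
    Submodule.span (ZMod p) (Set.range fun c : C₀ => M c) ⊓
      LinearMap.ker (∑ j : F × Fin ℓ,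
        (LinearMap.proj j : ((F × Fin ℓ) → ZMod p) →ₗ[ZMod p] ZMod p))
      ≤ LinearMap.ker M.mulVecLin ∧
    Fintype.card F * ℓ - 1 ≤
      2 * Module.finrank (ZMod p) (LinearMap.ker M.mulVecLin) := by
  haveI : Fintype C₀ := Fintype.ofFinite C₀
  have hℓ : (ℓ : ZMod p) ≠ 0 := by
    rwa [Ne, ZMod.natCast_eq_zero_iff]
  -- each row sums to ℓ
  have hsum : ∀ c : C₀, ∑ j : F × Fin ℓ, M c j = (ℓ : ZMod p) := by
    intro c
    simp only [hM]
    rw [Fintype.sum_prod_type_right]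
    have : ∀ i : Fin ℓ, (∑ α : F, if c.1 i = α then (1 : ZMod p) else 0) = 1 := by
      intro i
      simp [Finset.sum_ite_eq]
    simp [this]
  -- inner product of two rows is ℓ
  have key : ∀ c c' : C₀, ∑ j : F × Fin ℓ, M c j * M c' j = (ℓ : ZMod p) := by
    intro c c'
    simp only [hM]
    rw [Fintype.sum_prod_type_right]
    have h1 : ∀ i : Fin ℓ,
        (∑ α : F, (if c.1 i = α then (1 : ZMod p) else 0) *
          (if c'.1 i = α then (1 : ZMod p) else 0))
        = if c.1 i = c'.1 i then 1 else 0 := by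
      intro i
      rw [Finset.sum_eq_single (c.1 i)]
      · by_cases h : c.1 i = c'.1 i <;> simp [h, eq_comm]
      · intro b _ hb
        simp [Ne.symm hb]
      · simp
    simp only [h1]
    rw [Finset.sum_boole]
    have hcard : (Finset.univ.filter fun i => c.1 i = c'.1 i).card
        + hammingDist c.1 c'.1 = ℓ := by
      rw [hammingDist]
      have := Finset.card_filter_add_card_filter_not
        (s := (Finset.univ : Finset (Fin ℓ))) (p := fun i => c.1 i = c'.1 i)
      simpa [hammingDist] using this
    have hdvd : p ∣ hammingDist c.1 c'.1 := by
      rw [hammingDist_eq_hammingNorm]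
      exact hdiv _ (C₀.add_mem (C₀.neg_mem c.2) c'.2)
    have hz : ((hammingDist c.1 c'.1 : ℕ) : ZMod p) = 0 :=
      (ZMod.natCast_eq_zero_iff _ _).mpr hdvd
    have := congrArg (fun n : ℕ => (n : ZMod p)) hcard
    push_cast at this
    rw [hz, add_zero] at this
    exact_mod_cast this
  set φ : ((F × Fin ℓ) → ZMod p) →ₗ[ZMod p] ZMod p :=
    ∑ j : F × Fin ℓ, (LinearMap.proj j : ((F × Fin ℓ) → ZMod p) →ₗ[ZMod p] ZMod p) with hφ
  have hφ_apply : ∀ x : (F × Fin ℓ) → ZMod p, φ x = ∑ j, x j := by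
    intro x; simp [hφ]
  -- Part 1
  have part1 : Submodule.span (ZMod p) (Set.range fun c : C₀ => M c) ⊓
      LinearMap.ker φ ≤ LinearMap.ker M.mulVecLin := by
    intro x hx
    rw [Submodule.mem_inf] at hx
    obtain ⟨hx1, hx2⟩ := hx
    rw [Submodule.mem_span_range_iff_exists_fun] at hx1
    obtain ⟨u, hu⟩ := hx1
    have hxj : ∀ j, x j = ∑ c : C₀, u c * M c j := by
      intro j
      rw [← hu]; simp
    have husum : (∑ c : C₀, u c) = 0 := by
      have h0 : φ x = 0 := hx2
      rw [hφ_apply] at h0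
      have : ∑ j, x j = (∑ c : C₀, u c) * (ℓ : ZMod p) := by
        simp only [hxj]
        rw [Finset.sum_comm]
        rw [Finset.sum_mul]
        refine Finset.sum_congr rfl fun c _ => ?_
        rw [← Finset.mul_sum, hsum]
      rw [this] at h0
      exact (mul_eq_zero.mp h0).resolve_right hℓ
    rw [LinearMap.mem_ker]
    funext c'
    show ∑ j, M c' j * x j = 0
    calc ∑ j, M c' j * x j
        = ∑ j, M c' j * ∑ c : C₀, u c * M c j := by simp only [hxj]
      _ = ∑ c : C₀, u c * ∑ j, M c' j * M c j := by
          simp_rw [Finset.mul_sum]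
          rw [Finset.sum_comm]
          exact Finset.sum_congr rfl fun c _ => Finset.sum_congr rfl fun j _ => by ring
      _ = (∑ c : C₀, u c) * (ℓ : ZMod p) := by
          rw [Finset.sum_mul]
          refine Finset.sum_congr rfl fun c _ => by rw [key]
      _ = 0 := by rw [husum, zero_mul]
  refine ⟨part1, ?_⟩
  -- Part 2
  set S := Submodule.span (ZMod p) (Set.range fun c : C₀ => M c)
  set K := LinearMap.ker M.mulVecLin
  have hn : Module.finrank (ZMod p) ((F × Fin ℓ) → ZMod p) = Fintype.card F * ℓ := by
    rw [Module.finrank_pi]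
    simp
  -- rank-nullity for M
  have hrn : Module.finrank (ZMod p) S + Module.finrank (ZMod p) K
      = Fintype.card F * ℓ := by
    have := LinearMap.finrank_range_add_finrank_ker M.mulVecLin
    rw [hn] at this
    rw [← this]
    congr 1
    have := Matrix.rank_eq_finrank_span_row M
    rw [Matrix.rank] at this
    exact this.symm
  -- finrank of P
  have hℓpos : 0 < ℓ := Nat.pos_of_ne_zero (by rintro rfl; exact hpl (dvd_zero p))
  have hφne : φ ≠ 0 := by
    intro h
    set j₀ : F × Fin ℓ := (0, ⟨0, hℓpos⟩)
    have h0 : φ (fun j => if j = j₀ then 1 else 0) = 0 := by rw [h]; rfl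
    rw [hφ_apply] at h0
    rw [Finset.sum_ite_eq' Finset.univ j₀ (fun _ => (1 : ZMod p))] at h0
    simp at h0
  have hP : Module.finrank (ZMod p) (LinearMap.ker φ) + 1 = Fintype.card F * ℓ := by
    have := Module.Dual.finrank_ker_add_one_of_ne_zero (f := φ) hφne
    rwa [hn] at this
  -- S ⊓ ker φ ≤ K gives the bound
  have hinf : Module.finrank (ZMod p) (S ⊓ LinearMap.ker φ : Submodule (ZMod p) _)
      ≤ Module.finrank (ZMod p) K :=
    Submodule.finrank_mono part1
  have hsup := Submodule.finrank_sup_add_finrank_inf_eq S (LinearMap.ker φ)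
  have hsupn : Module.finrank (ZMod p) (S ⊔ LinearMap.ker φ : Submodule (ZMod p) _)
      ≤ Fintype.card F * ℓ := by
    rw [← hn]
    exact Submodule.finrank_le _
  omega
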